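/- (Mertens' First Theorem) For every real x ≥ 2, |∑_{p ≤ x} (ln p)/p − ln x| < 2, where the sum is over primes p ≤ x. -/

import Mathlib

open Finset
open scoped Nat

-- log of factorial: upper bound
lemma mertens_log_fac_le (n : ℕ) : Real.log (n !) ≤ n * Real.log n := by
  have h : (n ! : ℝ) ≤ (n : ℝ) ^ n := by exact_mod_cast Nat.factorial_le_pow n
  calc Real.log (n !) ≤ Real.log ((n : ℝ) ^ n) :=
        Real.log_le_log (by exact_mod_cast Nat.factorial_pos n) h
    _ = n * Real.log n := Real.log_pow n n

-- log of factorial: lower bound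
lemma mertens_log_fac_ge (n : ℕ) (hn : 1 ≤ n) :
    (n : ℝ) * Real.log n - n + 1 ≤ Real.log (n !) := by
  induction n with
  | zero => omega
  | succ m ih =>
    rcases Nat.eq_zero_or_pos m with rfl | hm
    · simp
    have ih' := ih hm
    have hm0 : (0:ℝ) < m := by exact_mod_cast hm
    have hlog : Real.log ((m+1 : ℝ) / m) ≤ ((m+1 : ℝ) / m) - 1 :=
      Real.log_le_sub_one_of_pos (by positivity)
    have hdiv : ((m+1 : ℝ) / m) - 1 = 1 / m := by field_simp; ring
    have hsplit : Real.log ((m+1 : ℝ)) = Real.log m + Real.log ((m+1:ℝ)/m) := by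
      rw [Real.log_div (by positivity) (ne_of_gt hm0)]; ring
    have hfac : Real.log ((m+1) !) = Real.log (m !) + Real.log ((m+1 : ℝ)) := by
      rw [Nat.factorial_succ]
      push_cast
      rw [Real.log_mul (by positivity) (by exact_mod_cast (Nat.factorial_pos m).ne')]
      push_cast; ring
    have key : (m:ℝ) * Real.log ((m+1:ℝ)/m) ≤ 1 := by
      calc (m:ℝ) * Real.log ((m+1:ℝ)/m) ≤ (m:ℝ) * (1/m) := by
            apply mul_le_mul_of_nonneg_left _ (le_of_lt hm0)
            rw [← hdiv]; exact hlog
        _ = 1 := by field_simp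
    have : ((m:ℝ)+1) * Real.log ((m:ℝ)+1) - ((m:ℝ)+1) + 1 ≤
        ((m:ℝ) * Real.log m - m + 1) + Real.log ((m+1:ℝ)) := by
      rw [hsplit]; nlinarith [key]
    push_cast
    push_cast at ih' hfac
    linarith [ih', this, hfac.ge, hfac.le]

-- Chebyshev-type bound: sum of log p over primes ≤ n
lemma mertens_theta_le (n : ℕ) :
    ∑ p ∈ (Finset.range (n + 1)).filter Nat.Prime, Real.log p ≤ n * (2 * Real.log 2) := by
  have h4 : (primorial n : ℝ) ≤ (4 : ℝ) ^ n := by exact_mod_cast primorial_le_4_pow n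
  have hprod : (primorial n : ℝ) =
      ∏ p ∈ (Finset.range (n + 1)).filter Nat.Prime, (p : ℝ) := by
    unfold primorial; push_cast; rfl
  have hlog : ∑ p ∈ (Finset.range (n + 1)).filter Nat.Prime, Real.log p =
      Real.log (primorial n : ℝ) := by
    rw [hprod, Real.log_prod]
    intro p hp
    have := (Finset.mem_filter.mp hp).2.pos
    positivity
  rw [hlog]
  calc Real.log (primorial n : ℝ) ≤ Real.log ((4:ℝ) ^ n) :=
        Real.log_le_log (by exact_mod_cast primorial_pos n) h4
    _ = n * Real.log 4 := by rw [Real.log_pow]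
    _ = n * (2 * Real.log 2) := by
        rw [show (4:ℝ) = 2^2 by norm_num, Real.log_pow]; push_cast; ring

-- log n! = ∑ over primes, ν_p * log p
lemma mertens_log_fac_eq (n : ℕ) :
    Real.log (n !) = ∑ p ∈ (Finset.range (n + 1)).filter Nat.Prime,
      ((n !).factorization p : ℝ) * Real.log p := by
  have hne : n ! ≠ 0 := (Nat.factorial_pos n).ne'
  have hfac : (n ! : ℕ) = ∏ p ∈ (Finset.range (n + 1)).filter Nat.Prime,
      p ^ (n !).factorization p := by
    conv_lhs => rw [← Nat.factorization_prod_pow_eq_self hne]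
    rw [Finsupp.prod]
    apply Finset.prod_subset
    · intro p hp
      rw [Nat.support_factorization] at hp
      have hp' : p.Prime := Nat.prime_of_mem_primeFactors hp
      have hdvd : p ∣ n ! := Nat.dvd_of_mem_primeFactors hp
      have hle : p ≤ n := (Nat.Prime.dvd_factorial hp').mp hdvd
      exact Finset.mem_filter.mpr ⟨Finset.mem_range.mpr (Nat.lt_succ_of_le hle), hp'⟩
    · intro p _ hp
      rw [Finsupp.notMem_support_iff.mp hp, pow_zero]
  have : (n ! : ℝ) = ∏ p ∈ (Finset.range (n + 1)).filter Nat.Prime,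
      (p : ℝ) ^ (n !).factorization p := by exact_mod_cast hfac
  rw [this, Real.log_prod]
  · apply Finset.sum_congr rfl
    intro p hp
    rw [Real.log_pow]
  · intro p hp
    have := (Finset.mem_filter.mp hp).2.pos
    positivity

lemma mertens_geom_tail {p : ℝ} (hp : 2 ≤ p) (m : ℕ) :
    ∑ i ∈ Finset.Ico 2 m, ((1:ℝ)/p)^i ≤ 1/(p*(p-1)) := by
  have hp0 : (0:ℝ) < p := by linarith
  set r : ℝ := 1/p with hr
  have hr0 : 0 ≤ r := by positivity
  have hr1 : r < 1 := by rw [hr]; rw [div_lt_one hp0]; linarith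
  have hgeom : ∀ k : ℕ, ∑ j ∈ Finset.range k, r^j ≤ 1/(1-r) := by
    intro k
    rw [geom_sum_eq (ne_of_lt hr1)]
    have h1r : (0:ℝ) < 1 - r := by linarith
    have heq : (r ^ k - 1) / (r - 1) = (1 - r^k)/(1 - r) := by
      rw [← neg_div_neg_eq]; ring_nf
    rw [heq, div_le_div_iff₀ h1r h1r]
    nlinarith [pow_nonneg hr0 k]
  calc ∑ i ∈ Finset.Ico 2 m, r^i = ∑ j ∈ Finset.range (m-2), r^(2+j) := by
        rw [Finset.sum_Ico_eq_sum_range]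
    _ = r^2 * ∑ j ∈ Finset.range (m-2), r^j := by
        rw [Finset.mul_sum]; apply Finset.sum_congr rfl; intro j _; rw [pow_add]
    _ ≤ r^2 * (1/(1-r)) := by
        apply mul_le_mul_of_nonneg_left (hgeom _) (by positivity)
    _ = 1/(p*(p-1)) := by
        have h1 : p - 1 ≠ 0 := by linarith
        have h2 : p ≠ 0 := by linarith
        rw [hr]; field_simp

lemma mertens_legendre (n p : ℕ) (hp : p.Prime) :
    (n !).factorization p = ∑ i ∈ Finset.Ico 1 (n+1), n / p ^ i := by
  have hb : Nat.log p n < n + 1 := Nat.lt_succ_of_le (Nat.log_le_self p n)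
  have h1 := Nat.Prime.emultiplicity_factorial hp hb
  have h2 := Nat.multiplicity_eq_factorization hp (Nat.factorial_pos n).ne'
  have h3 := multiplicity_eq_of_emultiplicity_eq_some h1
  omega

lemma mertens_nu_lower (n p : ℕ) (hn : 1 ≤ n) (hp : p.Prime) :
    n / p ≤ (n !).factorization p := by
  rw [mertens_legendre n p hp]
  have h1 : (1:ℕ) ∈ Finset.Ico 1 (n+1) := by simp; omega
  calc n / p = n / p ^ 1 := by rw [pow_one]
    _ ≤ _ := Finset.single_le_sum (f := fun i => n / p ^ i) (fun i _ => Nat.zero_le _) h1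

lemma mertens_nu_upper (n p : ℕ) (hn : 1 ≤ n) (hp : p.Prime) :
    ((n !).factorization p : ℝ) ≤ n / p + n / (p * ((p:ℝ) - 1)) := by
  have hp2 : (2:ℝ) ≤ p := by exact_mod_cast hp.two_le
  have hp0 : (0:ℝ) < p := by linarith
  rw [mertens_legendre n p hp]
  push_cast
  rw [Finset.sum_eq_sum_Ico_succ_bot (by omega : 1 < n + 1)]
  have h1 : ((n / p ^ 1 : ℕ) : ℝ) ≤ (n:ℝ) / p := by
    rw [pow_one]; exact Nat.cast_div_le
  have h2 : ∑ i ∈ Finset.Ico 2 (n+1), ((n / p ^ i : ℕ) : ℝ) ≤ (n:ℝ) / (p * ((p:ℝ) - 1)) := by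
    calc ∑ i ∈ Finset.Ico 2 (n+1), ((n / p ^ i : ℕ) : ℝ)
        ≤ ∑ i ∈ Finset.Ico 2 (n+1), (n:ℝ) * ((1:ℝ)/p)^i := by
          apply Finset.sum_le_sum
          intro i _
          calc ((n / p ^ i : ℕ) : ℝ) ≤ (n:ℝ) / (p:ℝ)^i := by
                refine le_trans Nat.cast_div_le ?_
                push_cast; rfl
            _ = (n:ℝ) * ((1:ℝ)/p)^i := by rw [div_pow, one_pow]; ring
      _ = (n:ℝ) * ∑ i ∈ Finset.Ico 2 (n+1), ((1:ℝ)/p)^i := by rw [Finset.mul_sum]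
      _ ≤ (n:ℝ) * (1/(p*((p:ℝ)-1))) := by
          apply mul_le_mul_of_nonneg_left (mertens_geom_tail hp2 _) (by positivity)
      _ = (n:ℝ) / (p * ((p:ℝ) - 1)) := by ring
  push_cast at h1 h2
  linarith

lemma mertens_log_le_ratio (p k m : ℕ) (hp : 1 ≤ p) (hk : 0 < k) (h : p ^ k ≤ 2 ^ m) :
    Real.log p ≤ (m : ℝ) / k * Real.log 2 := by
  have hcast : ((p : ℝ)) ^ k ≤ (2 : ℝ) ^ m := by exact_mod_cast h
  have hlog : (k : ℝ) * Real.log p ≤ (m : ℝ) * Real.log 2 := by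
    rw [← Real.log_pow, ← Real.log_pow]
    exact Real.log_le_log (by positivity) hcast
  have hk0 : (0:ℝ) < k := by exact_mod_cast hk
  rw [div_mul_eq_mul_div, le_div_iff₀ hk0]
  linarith

lemma mertens_C_step (m : ℕ) (hm : 16 ≤ m) :
    Real.log (m+1) / ((m+1) * (((m:ℝ)+1) - 1)) + (Real.log ((m:ℝ)+1) + 17/16)/((m:ℝ)+1)
      ≤ (Real.log m + 17/16)/(m:ℝ) := by
  have hM : (16:ℝ) ≤ m := by exact_mod_cast hm
  set M : ℝ := (m:ℝ) with hMdef
  have hM0 : (0:ℝ) < M := by linarith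
  have hlogr : Real.log ((M+1)/M) ≤ (M+1)/M - 1 := Real.log_le_sub_one_of_pos (by positivity)
  have hsplit : Real.log (M+1) = Real.log M + Real.log ((M+1)/M) := by
    rw [Real.log_div (by linarith) (by linarith)]; ring
  have hd : (M+1)/M - 1 = 1/M := by field_simp; ring
  have key : (M+1) * Real.log (M+1) ≤ (M+1) * Real.log M + 17/16 := by
    have h1 : (M+1) * Real.log ((M+1)/M) ≤ (M+1) * (1/M) := by
      apply mul_le_mul_of_nonneg_left _ (by linarith)
      rw [← hd]; exact hlogr
    have h2 : (M+1) * (1/M) ≤ 17/16 := by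
      rw [mul_one_div, div_le_div_iff₀ hM0 (by norm_num : (0:ℝ) < 16)]
      linarith
    nlinarith [hsplit]
  have h1 : Real.log (M+1) / ((M+1) * (M+1-1)) + (Real.log (M+1) + 17/16)/(M+1)
      = (Real.log (M+1) + M*(Real.log (M+1) + 17/16))/(M*(M+1)) := by
    rw [add_sub_cancel_right]; field_simp
  have h2 : (Real.log M + 17/16)/M = ((M+1)*(Real.log M + 17/16))/(M*(M+1)) := by
    field_simp
  rw [show ((m:ℝ)+1) - 1 = M + 1 - 1 from rfl] at *
  rw [h1, h2]
  apply div_le_div_of_nonneg_right ?_ (by positivity)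
  nlinarith [key]

lemma mertens_C_base :
    ∑ p ∈ (Finset.range 17).filter Nat.Prime, Real.log p / (p * ((p:ℝ) - 1))
      + (Real.log (16:ℕ) + 17/16)/(16:ℕ) ≤ 1 := by
  have hfilter : (Finset.range 17).filter Nat.Prime = {2, 3, 5, 7, 11, 13} := by decide
  rw [hfilter]
  have hL2 : Real.log 2 < 0.6931471808 := Real.log_two_lt_d9
  have hL2pos : (0:ℝ) < Real.log 2 := Real.log_pos (by norm_num)
  have h3 : Real.log 3 ≤ (65:ℝ)/41 * Real.log 2 := by
    exact_mod_cast mertens_log_le_ratio 3 41 65 (by norm_num) (by norm_num) (by norm_num)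
  have h5 : Real.log 5 ≤ (137:ℝ)/59 * Real.log 2 := by
    exact_mod_cast mertens_log_le_ratio 5 59 137 (by norm_num) (by norm_num) (by norm_num)
  have h7 : Real.log 7 ≤ (166:ℝ)/59 * Real.log 2 := by
    exact_mod_cast mertens_log_le_ratio 7 59 166 (by norm_num) (by norm_num) (by norm_num)
  have h11 : Real.log 11 ≤ (128:ℝ)/37 * Real.log 2 := by
    exact_mod_cast mertens_log_le_ratio 11 37 128 (by norm_num) (by norm_num) (by norm_num)
  have h13 : Real.log 13 ≤ (100:ℝ)/27 * Real.log 2 := by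
    exact_mod_cast mertens_log_le_ratio 13 27 100 (by norm_num) (by norm_num) (by norm_num)
  have h16 : Real.log (16:ℝ) = 4 * Real.log 2 := by
    rw [show (16:ℝ) = 2^4 by norm_num, Real.log_pow]
    norm_num
  rw [Finset.sum_insert (by decide), Finset.sum_insert (by decide),
    Finset.sum_insert (by decide), Finset.sum_insert (by decide),
    Finset.sum_insert (by decide), Finset.sum_singleton]
  push_cast
  rw [h16]
  norm_num
  nlinarith [hL2, hL2pos, h3, h5, h7, h11, h13]

lemma mertens_C_aux : ∀ m : ℕ, 16 ≤ m →
    ∑ p ∈ (Finset.range (m+1)).filter Nat.Prime, Real.log p / (p * ((p:ℝ) - 1))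
      + (Real.log m + 17/16)/(m:ℝ) ≤ 1 := by
  intro m hm
  induction m, hm using Nat.le_induction with
  | base => exact_mod_cast mertens_C_base
  | succ m hm ih =>
    have hstep := mertens_C_step m hm
    have hw : (0:ℝ) ≤ Real.log (m+1) / ((m+1) * (((m:ℝ)+1) - 1)) := by
      have h1 : (1:ℝ) ≤ (m:ℝ)+1 := by have : (0:ℝ) ≤ (m:ℝ) := Nat.cast_nonneg m; linarith
      have hM : (16:ℝ) ≤ m := by exact_mod_cast hm
      apply div_nonneg (Real.log_nonneg h1)
      nlinarith
    rw [show m+1+1 = (m+1)+1 from rfl, Finset.range_add_one, Finset.filter_insert]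
    by_cases hp : (m+1).Prime
    · rw [if_pos hp, Finset.sum_insert (by simp)]
      push_cast
      push_cast at ih hstep
      linarith
    · rw [if_neg hp]
      push_cast
      push_cast at ih hstep
      linarith

lemma mertens_C (n : ℕ) :
    ∑ p ∈ (Finset.range (n+1)).filter Nat.Prime, Real.log p / (p * ((p:ℝ) - 1)) ≤ 1 := by
  set m := max n 16 with hm
  have hm16 : 16 ≤ m := le_max_right n 16
  have haux := mertens_C_aux m hm16
  have hg : (0:ℝ) ≤ (Real.log m + 17/16)/(m:ℝ) := by
    have h1 : (1:ℝ) ≤ (m:ℝ) := by exact_mod_cast le_trans (by norm_num) hm16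
    apply div_nonneg _ (by linarith)
    have := Real.log_nonneg h1
    linarith
  have hsub : ∑ p ∈ (Finset.range (n+1)).filter Nat.Prime, Real.log p / (p * ((p:ℝ) - 1))
      ≤ ∑ p ∈ (Finset.range (m+1)).filter Nat.Prime, Real.log p / (p * ((p:ℝ) - 1)) := by
    apply Finset.sum_le_sum_of_subset_of_nonneg
    · apply Finset.filter_subset_filter
      exact Finset.range_subset_range.mpr (by omega)
    · intro p hp _
      have hp' : p.Prime := (Finset.mem_filter.mp hp).2
      have h2 : (2:ℝ) ≤ p := by exact_mod_cast hp'.two_le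
      apply div_nonneg (Real.log_nonneg (by linarith))
      nlinarith
  linarith

theorem mertens_first (x : ℝ) (hx : 2 ≤ x) :
    |∑ p ∈ (Finset.range (⌊x⌋₊ + 1)).filter Nat.Prime, Real.log p / p
      - Real.log x| < 2 := by
  set n := ⌊x⌋₊ with hn
  have hn2 : 2 ≤ n := Nat.le_floor (by exact_mod_cast hx)
  have hn1 : 1 ≤ n := by omega
  set N : ℝ := (n : ℝ) with hNdef
  have hN2 : (2:ℝ) ≤ N := by rw [hNdef]; exact_mod_cast hn2
  have hN0 : (0:ℝ) < N := by linarith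
  have hxN : N ≤ x := Nat.floor_le (by linarith)
  have hxN1 : x < N + 1 := by rw [hNdef, hn]; exact_mod_cast Nat.lt_floor_add_one x
  set P := (Finset.range (n+1)).filter Nat.Prime with hP
  set S := ∑ p ∈ P, Real.log p / p with hS
  set C := ∑ p ∈ P, Real.log p / (p * ((p:ℝ)-1)) with hC
  set θ := ∑ p ∈ P, Real.log p with hθ
  have hmem : ∀ p ∈ P, p.Prime := fun p hp => (Finset.mem_filter.mp hp).2
  have hp2 : ∀ p ∈ P, (2:ℝ) ≤ p := fun p hp => by exact_mod_cast (hmem p hp).two_le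
  have hlp : ∀ p ∈ P, 0 ≤ Real.log p := fun p hp =>
    Real.log_nonneg (by have := hp2 p hp; linarith)
  -- upper bound on log n!
  have hT_up : Real.log (n !) ≤ N * S + N * C := by
    rw [mertens_log_fac_eq n]
    calc ∑ p ∈ P, ((n !).factorization p : ℝ) * Real.log p
        ≤ ∑ p ∈ P, (N * (Real.log p / p) + N * (Real.log p / (p * ((p:ℝ)-1)))) := by
          apply Finset.sum_le_sum
          intro p hp
          have hnu := mertens_nu_upper n p hn1 (hmem p hp)
          have h2 := hp2 p hp
          have hl := hlp p hp
          have : ((n !).factorization p : ℝ) * Real.log p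
              ≤ (N / p + N / (p * ((p:ℝ) - 1))) * Real.log p :=
            mul_le_mul_of_nonneg_right hnu hl
          calc ((n !).factorization p : ℝ) * Real.log p
              ≤ (N / p + N / (p * ((p:ℝ) - 1))) * Real.log p := this
            _ = N * (Real.log p / p) + N * (Real.log p / (p * ((p:ℝ)-1))) := by ring
      _ = N * S + N * C := by
          rw [Finset.sum_add_distrib, ← Finset.mul_sum, ← Finset.mul_sum]
  -- lower bound on log n!
  have hT_down : N * S - θ ≤ Real.log (n !) := by
    rw [mertens_log_fac_eq n]
    have key : ∀ p ∈ P, N * (Real.log p / p) - Real.log p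
        ≤ ((n !).factorization p : ℝ) * Real.log p := by
      intro p hp
      have hprime := hmem p hp
      have h2 := hp2 p hp
      have hl := hlp p hp
      have hp0 : (0:ℝ) < p := by linarith
      have hnat : (n / p : ℕ) ≤ (n !).factorization p := mertens_nu_lower n p hn1 hprime
      have hfl : N / p - 1 ≤ ((n / p : ℕ) : ℝ) := by
        have hmod := Nat.div_add_mod n p
        have hltp : n % p < p := Nat.mod_lt _ hprime.pos
        have hcast : N < p * ((n / p : ℕ) : ℝ) + p := by
          have h9 : n < p * (n / p) + p := by omega
          rw [hNdef]
          exact_mod_cast h9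
        rw [div_sub_one (ne_of_gt hp0), div_le_iff₀ hp0]
        nlinarith
      have hfl2 : N / p - 1 ≤ ((n !).factorization p : ℝ) :=
        le_trans hfl (by exact_mod_cast hnat)
      calc N * (Real.log p / p) - Real.log p = (N / p - 1) * Real.log p := by ring
        _ ≤ ((n !).factorization p : ℝ) * Real.log p := mul_le_mul_of_nonneg_right hfl2 hl
    calc N * S - θ = ∑ p ∈ P, (N * (Real.log p / p) - Real.log p) := by
          rw [Finset.sum_sub_distrib, ← Finset.mul_sum]
      _ ≤ _ := Finset.sum_le_sum key
  have hTle : Real.log (n !) ≤ N * Real.log N := mertens_log_fac_le n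
  have hTge : N * Real.log N - N + 1 ≤ Real.log (n !) := mertens_log_fac_ge n hn1
  have hCle : C ≤ 1 := mertens_C n
  have hθle : θ ≤ N * (2 * Real.log 2) := mertens_theta_le n
  have hlog2 : Real.log 2 < 1 := by
    have := Real.log_two_lt_d9; linarith
  have hlog2pos : 0 < Real.log 2 := Real.log_pos (by norm_num)
  -- log x bounds
  have hlogxge : Real.log N ≤ Real.log x := Real.log_le_log hN0 hxN
  have hlogxlt : N * Real.log x < N * Real.log N + 1 := by
    have h1 : Real.log x < Real.log (N + 1) := Real.log_lt_log (by linarith) hxN1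
    have h2 : Real.log (N + 1) = Real.log N + Real.log ((N+1)/N) := by
      rw [Real.log_div (by linarith) (ne_of_gt hN0)]; ring
    have h3 : Real.log ((N+1)/N) ≤ (N+1)/N - 1 := Real.log_le_sub_one_of_pos (by positivity)
    have h4 : (N+1)/N - 1 = 1/N := by field_simp; ring
    have h5 : Real.log x < Real.log N + 1/N := by rw [h2] at h1; linarith [h3, h4.le, h4.ge]
    have h6 : N * Real.log x < N * (Real.log N + 1/N) :=
      (mul_lt_mul_iff_right₀ hN0).mpr h5
    have h7 : N * (Real.log N + 1/N) = N * Real.log N + 1 := by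
      rw [mul_add, mul_one_div, div_self (ne_of_gt hN0)]
    linarith
  rw [abs_lt]
  constructor
  · -- lower: -2 < S - log x
    have hmul : N * (-2) < N * (S - Real.log x) := by nlinarith
    have := (mul_lt_mul_iff_right₀ hN0).mp hmul
    linarith
  · -- upper: S - log x < 2
    have hmul : N * (S - Real.log x) < N * 2 := by nlinarith
    have := (mul_lt_mul_iff_right₀ hN0).mp hmul
    linarith
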